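/- If a matroid M is ℓ-chordal (ℓ ≥ 4), then its Orlik–Solomon algebra is (ℓ−2)-adic; that is, the ideal generated by differentials of all circuits equals the ideal generated by differentials of circuits with at most ℓ−1 elements: ℑ(𝔠) = ℑ(𝔠_{ℓ−1}). -/

import Mathlib

open ExteriorAlgebra

/-- The Grassmann algebra over `K` on generators `e 0, ..., e (n-1)`. -/
abbrev Grass (K : Type) [Field K] (n : ℕ) := ExteriorAlgebra K (Fin n → K)

/-- The generator `e i`. -/
noncomputable def gen (K : Type) [Field K] (n : ℕ) (i : Fin n) : Grass K n :=
  ExteriorAlgebra.ι K (Pi.single i 1)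

/-- The monomial associated to a list of indices. -/
noncomputable def monList (K : Type) [Field K] (n : ℕ) (l : List (Fin n)) : Grass K n :=
  (l.map (gen K n)).prod

/-- The monomial `e_X` of a subset `X ⊆ [n]`, factors in increasing order. -/
noncomputable def mon (K : Type) [Field K] (n : ℕ) (X : Finset (Fin n)) : Grass K n :=
  monList K n (X.sort (· ≤ ·))

/-- The degree `-1` antiderivation `∂` on the Grassmann algebra with `∂ (e i) = 1`
(left contraction with the covector sending each generator to `1`). -/
noncomputable def bd (K : Type) [Field K] (n : ℕ) : Grass K n →ₗ[K] Grass K n :=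
  CliffordAlgebra.contractLeft (∑ i : Fin n, LinearMap.proj i)

/-- The two-sided ideal `ℑ(𝔛)` generated by the differentials `∂ e_Y`, `Y ∈ 𝔛`. -/
noncomputable def OSIdeal (K : Type) [Field K] (n : ℕ) (X : Set (Finset (Fin n))) :
    TwoSidedIdeal (Grass K n) :=
  TwoSidedIdeal.span ((fun Y => bd K n (mon K n Y)) '' X)

/-- A circuit of a matroid: a minimal dependent (finite) set. -/
def IsCircuit {α : Type} [DecidableEq α] (M : Matroid α) (C : Finset α) : Prop :=
  M.Dep (C : Set α) ∧ ∀ D : Finset α, D ⊂ C → ¬ M.Dep (D : Set α)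

/-- `i` is a chord of the circuit `C`, witnessed by circuits `C₁, C₂` with
`C₁ ∩ C₂ = {i}` and `C = C₁ Δ C₂`. -/
def IsChord {α : Type} [DecidableEq α] (M : Matroid α) (C : Finset α) (i : α) : Prop :=
  ∃ C₁ C₂ : Finset α, IsCircuit M C₁ ∧ IsCircuit M C₂ ∧ C₁ ∩ C₂ = {i} ∧ C = symmDiff C₁ C₂

def HasChord {α : Type} [DecidableEq α] (M : Matroid α) (C : Finset α) : Prop :=
  ∃ i, IsChord M C i

/-- `M` is `ℓ`-chordal: every circuit with at least `ℓ` elements has a chord. -/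
def Chordal {α : Type} [DecidableEq α] (M : Matroid α) (l : ℕ) : Prop :=
  ∀ C : Finset α, IsCircuit M C → l ≤ C.card → HasChord M C

/-- `M` is simple: every circuit has at least 3 elements. -/
def SimpleM {α : Type} [DecidableEq α] (M : Matroid α) : Prop :=
  ∀ C : Finset α, IsCircuit M C → 3 ≤ C.card

/-- `M` is binary: the symmetric difference of two distinct circuits contains a circuit. -/
def BinaryM {α : Type} [DecidableEq α] (M : Matroid α) : Prop :=
  ∀ C D : Finset α, IsCircuit M C → IsCircuit M D → C ≠ D →
    ∃ C', IsCircuit M C' ∧ C' ⊆ symmDiff C D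

/-- The set `𝔠` of circuits of `M`. -/
def Circuits {α : Type} [DecidableEq α] (M : Matroid α) : Set (Finset α) :=
  {C | IsCircuit M C}

/-- The set `𝔠_k` of circuits of `M` with at most `k` elements. -/
def CircuitsLe {α : Type} [DecidableEq α] (M : Matroid α) (k : ℕ) : Set (Finset α) :=
  {C | IsCircuit M C ∧ C.card ≤ k}


section Aux

variable (K : Type) [Field K] (n : ℕ)

lemma gen_anticomm (i j : Fin n) : gen K n i * gen K n j = - (gen K n j * gen K n i) :=
  eq_neg_of_add_eq_zero_left (ExteriorAlgebra.ι_add_mul_swap _ _)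

lemma bd_gen_mul (i : Fin n) (x : Grass K n) :
    bd K n (gen K n i * x) = x - gen K n i * bd K n x := by
  unfold bd gen
  rw [CliffordAlgebra.contractLeft_ι_mul]
  congr 1
  simp [LinearMap.proj_apply, Finset.sum_pi_single']

lemma monList_nil : monList K n [] = 1 := rfl

lemma monList_cons (j : Fin n) (l : List (Fin n)) :
    monList K n (j :: l) = gen K n j * monList K n l := by
  simp [monList]

lemma monList_append (l l' : List (Fin n)) :
    monList K n (l ++ l') = monList K n l * monList K n l' := by
  simp [monList]

lemma monList_perm {l l' : List (Fin n)} (h : l.Perm l') :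
    ∃ c : K, c * c = 1 ∧ monList K n l = c • monList K n l' := by
  induction h with
  | nil => exact ⟨1, by ring, by simp⟩
  | cons x _ ih =>
    obtain ⟨c, hc, he⟩ := ih
    exact ⟨c, hc, by rw [monList_cons, monList_cons, he, mul_smul_comm]⟩
  | swap x y l =>
    refine ⟨-1, by ring, ?_⟩
    rw [monList_cons, monList_cons, monList_cons, monList_cons, ← mul_assoc, ← mul_assoc,
      gen_anticomm]
    simp
  | trans _ _ ih1 ih2 =>
    obtain ⟨c, hc, he⟩ := ih1
    obtain ⟨c', hc', he'⟩ := ih2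
    exact ⟨c * c', by rw [mul_mul_mul_comm, hc, hc', one_mul],
      by rw [he, he', smul_smul]⟩

lemma bd_monList_mul (l : List (Fin n)) (x : Grass K n) :
    bd K n (monList K n l * x)
      = bd K n (monList K n l) * x + ((-1 : K) ^ l.length) • (monList K n l * bd K n x) := by
  induction l with
  | nil =>
    simp [monList_nil, bd, CliffordAlgebra.contractLeft_one]
  | cons j l ih =>
    rw [monList_cons, mul_assoc, bd_gen_mul, ih, bd_gen_mul]
    simp only [List.length_cons, pow_succ, mul_sub, sub_mul, mul_add, smul_sub, smul_add,
      mul_smul_comm, smul_smul, mul_assoc]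
    module

lemma gen_mul_monList (i : Fin n) (l : List (Fin n)) :
    gen K n i * monList K n l = ((-1 : K) ^ l.length) • (monList K n l * gen K n i) := by
  induction l with
  | nil => simp [monList_nil]
  | cons j l ih =>
    rw [monList_cons, ← mul_assoc, gen_anticomm, neg_mul, mul_assoc, ih]
    simp only [List.length_cons, pow_succ, mul_smul_comm, smul_smul, mul_assoc]
    module

lemma gen_mul_bd_monList (i : Fin n) (l : List (Fin n)) :
    gen K n i * bd K n (monList K n l)
      = ((-1 : K) ^ (l.length + 1)) • (bd K n (monList K n l) * gen K n i) := by
  induction l with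
  | nil => simp [monList_nil, bd, CliffordAlgebra.contractLeft_one]
  | cons j l ih =>
    have hb : bd K n (monList K n (j :: l)) = monList K n l - gen K n j * bd K n (monList K n l) := by
      rw [monList_cons, bd_gen_mul]
    rw [hb, mul_sub, sub_mul, gen_mul_monList, ← mul_assoc, gen_anticomm, neg_mul, mul_assoc, ih]
    simp only [List.length_cons, pow_succ, mul_smul_comm, smul_smul, smul_sub, mul_assoc]
    module

lemma mon_insert {X : Finset (Fin n)} {i : Fin n} (h : i ∈ X) :
    ∃ c : K, c * c = 1 ∧ mon K n X = c • (gen K n i * mon K n (X.erase i)) := by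
  have hperm : (X.sort (· ≤ ·)).Perm (i :: (X.erase i).sort (· ≤ ·)) := by
    rw [← Multiset.coe_eq_coe]
    have h2 : ((i :: (X.erase i).sort (· ≤ ·) : List (Fin n)) : Multiset (Fin n))
        = i ::ₘ (X.erase i).val := by
      rw [← Finset.sort_eq (X.erase i) (· ≤ ·)]; rfl
    rw [Finset.sort_eq, h2, Finset.erase_val, Multiset.cons_erase (Finset.mem_def.mp h)]
  obtain ⟨c, hc, he⟩ := monList_perm K n hperm
  exact ⟨c, hc, by rw [mon, he, monList_cons]; rfl⟩

lemma mon_union {A B : Finset (Fin n)} (h : Disjoint A B) :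
    ∃ c : K, c * c = 1 ∧ mon K n (A ∪ B) = c • (mon K n A * mon K n B) := by
  have hperm : ((A ∪ B).sort (· ≤ ·)).Perm (A.sort (· ≤ ·) ++ B.sort (· ≤ ·)) := by
    rw [← Multiset.coe_eq_coe]
    have h2 : ((A.sort (· ≤ ·) ++ B.sort (· ≤ ·) : List (Fin n)) : Multiset (Fin n))
        = A.val + B.val := by
      rw [← Finset.sort_eq A (· ≤ ·), ← Finset.sort_eq B (· ≤ ·)]; rfl
    rw [Finset.sort_eq, h2, ← Finset.disjUnion_eq_union _ _ h]; rfl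
  obtain ⟨c, hc, he⟩ := monList_perm K n hperm
  exact ⟨c, hc, by rw [mon, he, monList_append]; rfl⟩

lemma smul_mem' (I : TwoSidedIdeal (Grass K n)) (c : K) {x : Grass K n} (h : x ∈ I) :
    c • x ∈ I := by
  rw [Algebra.smul_def]; exact I.mul_mem_left _ _ h

lemma key (I : TwoSidedIdeal (Grass K n)) (C₁ C₂ : Finset (Fin n)) (i : Fin n)
    (hint : C₁ ∩ C₂ = {i}) (h1 : bd K n (mon K n C₁) ∈ I) (h2 : bd K n (mon K n C₂) ∈ I) :
    bd K n (mon K n (symmDiff C₁ C₂)) ∈ I := by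
  have hmem : ∀ x, x ∈ C₁ ∧ x ∈ C₂ ↔ x = i := by
    intro x; rw [← Finset.mem_inter, hint, Finset.mem_singleton]
  have hi1 : i ∈ C₁ := ((hmem i).mpr rfl).1
  have hi2 : i ∈ C₂ := ((hmem i).mpr rfl).2
  set A := C₁.erase i with hA
  set B := C₂.erase i with hB
  have hdisj : Disjoint A B := by
    rw [Finset.disjoint_left]
    intro x hxA hxB
    have h1 := Finset.mem_erase.mp hxA
    have h2 := Finset.mem_erase.mp hxB
    exact h1.1 ((hmem x).mp ⟨h1.2, h2.2⟩)
  have hsd : symmDiff C₁ C₂ = A ∪ B := by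
    ext x
    simp only [Finset.mem_symmDiff, Finset.mem_union, hA, hB, Finset.mem_erase]
    constructor
    · rintro (⟨hx1, hx2⟩ | ⟨hx2, hx1⟩)
      · exact Or.inl ⟨fun hxi => hx2 (hxi ▸ hi2), hx1⟩
      · exact Or.inr ⟨fun hxi => hx1 (hxi ▸ hi1), hx2⟩
    · rintro (⟨hxi, hx1⟩ | ⟨hxi, hx2⟩)
      · exact Or.inl ⟨hx1, fun hx2 => hxi ((hmem x).mp ⟨hx1, hx2⟩)⟩
      · exact Or.inr ⟨hx2, fun hx1 => hxi ((hmem x).mp ⟨hx1, hx2⟩)⟩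
  obtain ⟨c₁, hc₁, e₁⟩ := mon_insert K n hi1
  obtain ⟨c₂, hc₂, e₂⟩ := mon_insert K n hi2
  obtain ⟨c₃, hc₃, e₃⟩ := mon_union K n hdisj
  set g := gen K n i with hg
  set a := mon K n A with ha'
  set b := mon K n B with hb'
  set J₁ := bd K n (mon K n C₁) with hJ₁
  set J₂ := bd K n (mon K n C₂) with hJ₂
  have ha : a = c₁ • J₁ + g * bd K n a := by
    have h : J₁ = c₁ • (a - g * bd K n a) := by rw [hJ₁, e₁, map_smul, bd_gen_mul]
    rw [h, smul_smul, hc₁, one_smul, sub_add_cancel]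
  have hb : b = c₂ • J₂ + g * bd K n b := by
    have h : J₂ = c₂ • (b - g * bd K n b) := by rw [hJ₂, e₂, map_smul, bd_gen_mul]
    rw [h, smul_smul, hc₂, one_smul, sub_add_cancel]
  set s : K := (-1 : K) ^ (A.sort (· ≤ ·)).length with hs
  have prod_rule : bd K n (a * b) = bd K n a * b + s • (a * bd K n b) :=
    bd_monList_mul K n (A.sort (· ≤ ·)) b
  have hcs : ∀ m : ℕ, ((-1 : K) ^ m) * ((-1 : K) ^ m) = 1 := fun m => by
    rw [← mul_pow]; norm_num
  have t3 : bd K n a * g = ((-1 : K) ^ ((A.sort (· ≤ ·)).length + 1)) • (g * bd K n a) := by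
    have h : g * bd K n a
        = ((-1 : K) ^ ((A.sort (· ≤ ·)).length + 1)) • (bd K n a * g) :=
      gen_mul_bd_monList K n i (A.sort (· ≤ ·))
    rw [h, smul_smul, hcs, one_smul]
  have hmain : bd K n (a * b) = c₂ • (bd K n a * J₂) + (s * c₁) • (J₁ * bd K n b) := by
    rw [prod_rule]
    nth_rewrite 1 [hb]
    nth_rewrite 2 [ha]
    rw [mul_add, mul_smul_comm, ← mul_assoc, t3, add_mul, smul_mul_assoc, smul_add]
    simp only [smul_smul, pow_succ, smul_mul_assoc, mul_assoc]
    module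
  have : bd K n (mon K n (symmDiff C₁ C₂)) = c₃ • bd K n (a * b) := by
    rw [hsd, e₃, map_smul]
  rw [this, hmain]
  exact smul_mem' K n I c₃ (I.add_mem
    (smul_mem' K n I c₂ (I.mul_mem_left _ _ h2))
    (smul_mem' K n I (s * c₁) (I.mul_mem_right _ _ h1)))

end Aux

/-- if `M` is `ℓ`-chordal (`ℓ ≥ 4`), then `ℑ(𝔠) = ℑ(𝔠_{ℓ-1})`,
i.e. `OS(M)` is `(ℓ-2)`-adic. -/
theorem stmt7 (K : Type) [Field K] (n : ℕ) (M : Matroid (Fin n)) (hE : M.E = Set.univ)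
    (hs : SimpleM M) (l : ℕ) (hl : 4 ≤ l) (hch : Chordal M l) :
    OSIdeal K n (Circuits M) = OSIdeal K n (CircuitsLe M (l - 1)) := by
  set I := OSIdeal K n (CircuitsLe M (l - 1)) with hI
  have keyfact : ∀ k (C : Finset (Fin n)), C.card ≤ k → IsCircuit M C →
      bd K n (mon K n C) ∈ I := by
    intro k
    induction k with
    | zero =>
      intro C hcard hC
      have := hs C hC; omega
    | succ k ih =>
      intro C hcard hC
      by_cases hsmall : C.card ≤ l - 1
      · exact TwoSidedIdeal.subset_span ⟨C, ⟨hC, hsmall⟩, rfl⟩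
      · obtain ⟨i, C₁, C₂, hC₁, hC₂, hint, hCeq⟩ := hch C hC (by omega)
        have h31 := hs C₁ hC₁
        have h32 := hs C₂ hC₂
        have hcap : (C₁ ∩ C₂).card = 1 := by rw [hint]; simp
        have hsub1 : C₁ ∩ C₂ ⊆ C₁ ∪ C₂ :=
          Finset.inter_subset_left.trans Finset.subset_union_left
        have hcu := Finset.card_union_add_card_inter C₁ C₂
        have hcd : C.card + (C₁ ∩ C₂).card = (C₁ ∪ C₂).card := by
          rw [hCeq]
          have : symmDiff C₁ C₂ = (C₁ ∪ C₂) \ (C₁ ∩ C₂) := by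
            rw [symmDiff_eq_sup_sdiff_inf]; rfl
          rw [this]
          exact Finset.card_sdiff_add_card_eq_card hsub1
        rw [hCeq]
        exact key K n I C₁ C₂ i hint (ih C₁ (by omega) hC₁) (ih C₂ (by omega) hC₂)
  apply le_antisymm
  · rw [TwoSidedIdeal.le_iff]
    intro x hx
    exact TwoSidedIdeal.mem_span_iff.mp hx I
      (by rintro _ ⟨C, hC, rfl⟩; exact keyfact C.card C le_rfl hC)
  · exact TwoSidedIdeal.span_mono (Set.image_mono fun C hC => hC.1)
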